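/- Let A be an n×n matrix over the nonnegative reals with Tr(A) ≤ 1. Then a positive vector x ∈ ℝ^n satisfies the tropical inequality A ⊗ x ≤ x if and only if there exists a positive vector u ∈ ℝ^n such that x = A* ⊗ u. -/

import Mathlib

open scoped NNReal

/-- Square matrices over the max-times semifield of nonnegative reals. -/
abbrev TMat (n : ℕ) := Matrix (Fin n) (Fin n) ℝ≥0

/-- Tropical (max-times) matrix product. -/
noncomputable def tmul {n : ℕ} (A B : TMat n) : TMat n :=
  fun i j => Finset.univ.sup fun k => A i k * B k j

/-- Tropical (max-times) matrix-vector product. -/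
noncomputable def tmulVec {n : ℕ} (A : TMat n) (x : Fin n → ℝ≥0) : Fin n → ℝ≥0 :=
  fun i => Finset.univ.sup fun j => A i j * x j

/-- Tropical identity matrix. -/
noncomputable def tId (n : ℕ) : TMat n := fun i j => if i = j then 1 else 0

/-- Tropical matrix powers. -/
noncomputable def tpow {n : ℕ} (A : TMat n) : ℕ → TMat n
  | 0 => tId n
  | k + 1 => tmul A (tpow A k)

/-- Tropical (entrywise max) matrix addition. -/
noncomputable def tadd {n : ℕ} (A B : TMat n) : TMat n := fun i j => A i j ⊔ B i j

/-- Entrywise scalar multiplication. -/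
noncomputable def tsmul {n : ℕ} (a : ℝ≥0) (A : TMat n) : TMat n := fun i j => a * A i j

/-- Tropical trace: tr A = max_i a_{ii}. -/
noncomputable def ttr {n : ℕ} (A : TMat n) : ℝ≥0 := Finset.univ.sup fun i => A i i

/-- Tropical "determinant": Tr(A) = max_{k=1..n} tr(A^k). -/
noncomputable def tTr {n : ℕ} (A : TMat n) : ℝ≥0 :=
  (Finset.Icc 1 n).sup fun k => ttr (tpow A k)

/-- Kleene star: entrywise max of A^0, ..., A^{n-1}. -/
noncomputable def tstar {n : ℕ} (A : TMat n) : TMat n :=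
  fun i j => (Finset.range n).sup fun k => tpow A k i j

/-- Tropical product of a finite chain of matrices F 0 ⊗ F 1 ⊗ ⋯ ⊗ F (k-1). -/
noncomputable def tchain {n : ℕ} : (k : ℕ) → (Fin k → TMat n) → TMat n
  | 0, _ => tId n
  | k + 1, F => tmul (F 0) (tchain k fun t => F t.succ)

/-- Tuples of k nonnegative integers with sum m. -/
def tuples (k m : ℕ) : Finset (Fin k → Fin (m + 1)) :=
  Finset.univ.filter fun f => (∑ t, (f t : ℕ)) = m

/-- Tuples of k integers from {0,1} with sum l. -/
def binTuples (k l : ℕ) : Finset (Fin k → Fin 2) :=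
  Finset.univ.filter fun j => (∑ t, (j t : ℕ)) = l

/-- The objective f_M(x) = max_{i,j} m_{ij} x_j / x_i. -/
noncomputable def fobj {n : ℕ} (M : TMat n) (x : Fin n → ℝ≥0) : ℝ≥0 :=
  Finset.univ.sup fun p : Fin n × Fin n => M p.1 p.2 * x p.2 / x p.1

/-- Spectral radius: λ = max_{k=1..n} (tr(A^k))^{1/k}. -/
noncomputable def specRad {n : ℕ} (A : TMat n) : ℝ≥0 :=
  (Finset.Icc 1 n).sup fun k => ttr (tpow A k) ^ ((1 : ℝ) / k)

/-- σ = max over k=1..n-1, m=1..n-k and tuples (i_1,…,i_k) with sum m of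
    (tr(A^{i_1} C ⋯ A^{i_k} C))^{1/m}. -/
noncomputable def sigmaC {n : ℕ} (A C : TMat n) : ℝ≥0 :=
  (Finset.Icc 1 (n - 1)).sup fun k =>
    (Finset.Icc 1 (n - k)).sup fun m =>
      (tuples k m).sup fun f =>
        ttr (tchain k fun t => tmul (tpow A (f t : ℕ)) C) ^ ((1 : ℝ) / m)

/-- r_{k,l,m} = max over tuples (i_1,…,i_k) with sum m and (j_1,…,j_k) ∈ {0,1}^k with
    sum l of tr(A^{i_1} B^{j_1} C^{1-j_1} ⋯ A^{i_k} B^{j_k} C^{1-j_k}). -/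
noncomputable def rklm {n : ℕ} (A B C : TMat n) (k l m : ℕ) : ℝ≥0 :=
  (tuples k m).sup fun f =>
    (binTuples k l).sup fun j =>
      ttr (tchain k fun t =>
        tmul (tpow A (f t : ℕ)) (tmul (tpow B (j t : ℕ)) (tpow C (1 - (j t : ℕ)))))

/-- G(s) = max_{k,m,l} r_{k,l,m}^{1/l} s^{-m/l}. -/
noncomputable def Gfun {n : ℕ} (A B C : TMat n) (s : ℝ≥0) : ℝ≥0 :=
  (Finset.Icc 1 (n - 1)).sup fun k =>
    (Finset.Icc 1 (n - k)).sup fun m =>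
      (Finset.Icc 1 k).sup fun l =>
        rklm A B C k l m ^ ((1 : ℝ) / l) * s ^ (-(m : ℝ) / l)

/-- H(t) = max_{k,m,l} r_{k,l,m}^{1/m} t^{-l/m}. -/
noncomputable def Hfun {n : ℕ} (A B C : TMat n) (t : ℝ≥0) : ℝ≥0 :=
  (Finset.Icc 1 (n - 1)).sup fun k =>
    (Finset.Icc 1 (n - k)).sup fun m =>
      (Finset.Icc 1 k).sup fun l =>
        rklm A B C k l m ^ ((1 : ℝ) / m) * t ^ (-(l : ℝ) / m)

/-- Unconstrained r_{k,m} = max over tuples (i_1,…,i_k) with sum m of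
    tr(A^{i_1} B ⋯ A^{i_k} B). -/
noncomputable def rkm {n : ℕ} (A B : TMat n) (k m : ℕ) : ℝ≥0 :=
  (tuples k m).sup fun f => ttr (tchain k fun t => tmul (tpow A (f t : ℕ)) B)

/-- Unconstrained G(s) = max_{k,m} r_{k,m}^{1/k} s^{-m/k}. -/
noncomputable def Gfun0 {n : ℕ} (A B : TMat n) (s : ℝ≥0) : ℝ≥0 :=
  (Finset.Icc 1 (n - 1)).sup fun k =>
    (Finset.Icc 1 (n - k)).sup fun m =>
      rkm A B k m ^ ((1 : ℝ) / k) * s ^ (-(m : ℝ) / k)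

/-- Unconstrained H(t) = max_{k,m} r_{k,m}^{1/m} t^{-k/m}. -/
noncomputable def Hfun0 {n : ℕ} (A B : TMat n) (t : ℝ≥0) : ℝ≥0 :=
  (Finset.Icc 1 (n - 1)).sup fun k =>
    (Finset.Icc 1 (n - k)).sup fun m =>
      rkm A B k m ^ ((1 : ℝ) / m) * t ^ (-(k : ℝ) / m)

/-- Pareto-minimal points of a set V ⊆ ℝ≥0 × ℝ≥0. -/
def ParetoMin (V : Set (ℝ≥0 × ℝ≥0)) (p : ℝ≥0 × ℝ≥0) : Prop :=
  p ∈ V ∧ ¬∃ q ∈ V, q.1 ≤ p.1 ∧ q.2 ≤ p.2 ∧ q ≠ p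


section AuxTrop

open Finset

lemma mul_supNN {ι : Type*} (a : ℝ≥0) (s : Finset ι) (f : ι → ℝ≥0) :
    a * s.sup f = s.sup fun i => a * f i :=
  Finset.comp_sup_eq_sup_comp (a * ·)
    (fun x y => by exact mul_max a x y) (mul_zero a)

lemma sup_mulNN {ι : Type*} (a : ℝ≥0) (s : Finset ι) (f : ι → ℝ≥0) :
    s.sup f * a = s.sup fun i => f i * a := by
  rw [mul_comm, mul_supNN]; simp [mul_comm]

/-- Weight of a path is at most the corresponding power entry. -/
lemma path_le_tpow {n : ℕ} (A : TMat n) :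
    ∀ (m : ℕ) (p : ℕ → Fin n),
      (∏ t ∈ Finset.range m, A (p t) (p (t + 1))) ≤ tpow A m (p 0) (p m) := by
  intro m
  induction m with
  | zero => intro p; simp [tpow, tId]
  | succ m IH =>
    intro p
    have h1 : (∏ t ∈ Finset.range (m + 1), A (p t) (p (t + 1)))
        = A (p 0) (p 1) * ∏ t ∈ Finset.range m, A (p (t + 1)) (p (t + 2)) := by
      rw [Finset.prod_range_succ']; ring
    rw [h1]
    have h2 := IH (fun t => p (t + 1))
    calc A (p 0) (p 1) * ∏ t ∈ Finset.range m, A (p (t + 1)) (p (t + 2))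
        ≤ A (p 0) (p 1) * tpow A m (p 1) (p (m + 1)) := by
          exact mul_le_mul_right h2 _
      _ ≤ tpow A (m + 1) (p 0) (p (m + 1)) := by
          show _ ≤ tmul A (tpow A m) (p 0) (p (m + 1))
          exact Finset.le_sup (f := fun k => A (p 0) k * tpow A m k (p (m + 1)))
            (Finset.mem_univ (p 1))

/-- Each power entry is realized (bounded above) by some path. -/
lemma tpow_le_path {n : ℕ} (A : TMat n) :
    ∀ (m : ℕ) (i j : Fin n),
      tpow A m i j = 0 ∨ ∃ p : ℕ → Fin n, p 0 = i ∧ p m = j ∧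
        tpow A m i j ≤ ∏ t ∈ Finset.range m, A (p t) (p (t + 1)) := by
  intro m
  induction m with
  | zero =>
    intro i j
    by_cases h : i = j
    · subst h
      exact Or.inr ⟨fun _ => i, rfl, rfl, by simp [tpow, tId]⟩
    · exact Or.inl (by simp [tpow, tId, h])
  | succ m IH =>
    intro i j
    have hne : (Finset.univ : Finset (Fin n)).Nonempty := ⟨i, Finset.mem_univ i⟩
    obtain ⟨k, -, hk⟩ := Finset.exists_mem_eq_sup Finset.univ hne
      (fun k => A i k * tpow A m k j)
    have hval : tpow A (m + 1) i j = A i k * tpow A m k j := hk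
    rcases IH k j with h0 | ⟨p, hp0, hpm, hle⟩
    · exact Or.inl (by rw [hval, h0, mul_zero])
    · refine Or.inr ⟨fun t => if t = 0 then i else p (t - 1), rfl, by simp [hpm], ?_⟩
      have h1 : (∏ t ∈ Finset.range (m + 1),
          A ((if t = 0 then i else p (t-1)) : Fin n)
            (if t + 1 = 0 then i else p (t + 1 - 1)))
          = (∏ t ∈ Finset.range m, A (p t) (p (t + 1))) * (A i (p 0)) := by
        rw [Finset.prod_range_succ']
        simp
      rw [h1, hval, hp0, mul_comm]
      exact mul_le_mul_left hle _

/-- Key lemma: if Tr(A) ≤ 1, then every power of A is dominated by A*. -/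
lemma tpow_le_tstar {n : ℕ} (A : TMat n) (hA : tTr A ≤ 1) (m : ℕ) :
    ∀ i j : Fin n, tpow A m i j ≤ tstar A i j := by
  induction m using Nat.strong_induction_on with
  | _ m IH =>
  intro i j
  by_cases hm : m < n
  · exact Finset.le_sup (f := fun k => tpow A k i j) (Finset.mem_range.2 hm)
  push_neg at hm
  have hn : 0 < n := i.pos
  rcases tpow_le_path A m i j with h0 | ⟨p, hp0, hpm, hle⟩
  · simp [h0]
  obtain ⟨s, t', hst, ht'n, hps⟩ : ∃ s t', s < t' ∧ t' ≤ n ∧ p s = p t' := by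
    obtain ⟨a, ha, b, hb, hab, heq⟩ :=
      Finset.exists_ne_map_eq_of_card_lt_of_maps_to (s := Finset.range (n + 1))
        (t := (Finset.univ : Finset (Fin n))) (by simp) (fun x _ => Finset.mem_univ (p x))
    rcases lt_or_gt_of_ne hab with h | h
    · exact ⟨a, b, h, Nat.lt_succ_iff.mp (Finset.mem_range.mp hb), heq⟩
    · exact ⟨b, a, h, Nat.lt_succ_iff.mp (Finset.mem_range.mp ha), heq.symm⟩
  set c := t' - s with hc
  have hc1 : 1 ≤ c := by omega
  have hcn : c ≤ n := by omega
  have hsc : s + c = t' := by omega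
  have hcm : c ≤ m := le_trans hcn hm
  -- the shortened path
  set p' : ℕ → Fin n := fun t => if t < s then p t else p (t + c) with hp'
  set f : ℕ → ℝ≥0 := fun t => A (p t) (p (t + 1)) with hf
  have hg : ∀ t, A (p' t) (p' (t + 1)) = if t < s then f t else f (t + c) := by
    intro t
    by_cases ht : t < s
    · have h1 : p' t = p t := if_pos ht
      have h2 : p' (t + 1) = p (t + 1) := by
        by_cases ht1 : t + 1 < s
        · exact if_pos ht1
        · have hts : t + 1 = s := by omega
          show (if t + 1 < s then p (t+1) else p (t + 1 + c)) = p (t + 1)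
          rw [if_neg ht1, hts, hsc, ← hps]
      rw [h1, h2, if_pos ht]
    · have h1 : p' t = p (t + c) := if_neg ht
      have h2 : p' (t + 1) = p (t + 1 + c) := if_neg (by omega)
      rw [h1, h2, if_neg ht]
      have harg : t + 1 + c = t + c + 1 := by omega
      rw [harg]
  -- cycle weight ≤ 1
  have hcyc : (∏ t ∈ Finset.range c, f (s + t)) ≤ 1 := by
    have h1 := path_le_tpow A c (fun t => p (s + t))
    have h2 : (∏ t ∈ Finset.range c, A (p (s + t)) (p (s + t + 1)))
        ≤ tpow A c (p s) (p (s + c)) := by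
      refine le_trans (le_of_eq ?_) h1
      refine Finset.prod_congr rfl fun t _ => ?_
      have harg : s + t + 1 = s + (t + 1) := by omega
      rw [harg]
    have h3 : tpow A c (p s) (p (s + c)) ≤ ttr (tpow A c) := by
      rw [hsc, ← hps]
      exact Finset.le_sup (f := fun v => tpow A c v v) (Finset.mem_univ (p s))
    have h4 : ttr (tpow A c) ≤ tTr A :=
      Finset.le_sup (f := fun k => ttr (tpow A k)) (Finset.mem_Icc.2 ⟨hc1, hcn⟩)
    calc (∏ t ∈ Finset.range c, f (s + t))
        = ∏ t ∈ Finset.range c, A (p (s + t)) (p (s + t + 1)) := by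
          refine Finset.prod_congr rfl fun t _ => ?_
          simp only [hf]
      _ ≤ tpow A c (p s) (p (s + c)) := h2
      _ ≤ ttr (tpow A c) := h3
      _ ≤ tTr A := h4
      _ ≤ 1 := hA
  -- original path weight ≤ shortened path weight
  have hsplit : (∏ t ∈ Finset.range m, f t)
      ≤ ∏ t ∈ Finset.range (m - c), A (p' t) (p' (t + 1)) := by
    have hmeq : m = s + (c + (m - t')) := by omega
    have hmc : m - c = s + (m - t') := by omega
    have hW : (∏ t ∈ Finset.range m, f t)
        = (∏ t ∈ Finset.range s, f t) *
          ((∏ t ∈ Finset.range c, f (s + t)) *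
            ∏ t ∈ Finset.range (m - t'), f (s + (c + t))) := by
      conv_lhs => rw [hmeq]
      rw [Finset.prod_range_add, Finset.prod_range_add]
    have hW' : (∏ t ∈ Finset.range (m - c), A (p' t) (p' (t + 1)))
        = (∏ t ∈ Finset.range s, f t) *
          ∏ t ∈ Finset.range (m - t'), f (s + (c + t)) := by
      rw [hmc, Finset.prod_range_add]
      congr 1
      · exact Finset.prod_congr rfl fun t ht => by
          rw [hg]; exact if_pos (Finset.mem_range.mp ht)
      · refine Finset.prod_congr rfl fun t ht => ?_
        rw [hg, if_neg (by omega)]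
        congr 1
        omega
    rw [hW, hW']
    exact mul_le_mul_right (by
      calc (∏ t ∈ Finset.range c, f (s + t)) * ∏ t ∈ Finset.range (m - t'), f (s + (c + t))
          ≤ 1 * ∏ t ∈ Finset.range (m - t'), f (s + (c + t)) := mul_le_mul_left hcyc _
        _ = _ := one_mul _) _
  -- shortened path endpoints
  have hp'0 : p' 0 = i := by
    by_cases h0 : 0 < s
    · show (if 0 < s then p 0 else p (0 + c)) = i
      rw [if_pos h0, hp0]
    · have hs0 : s = 0 := by omega
      show (if 0 < s then p 0 else p (0 + c)) = i
      rw [if_neg h0]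
      have : (0 : ℕ) + c = t' := by omega
      rw [this, ← hps, hs0, hp0]
  have hp'm : p' (m - c) = j := by
    show (if m - c < s then p (m - c) else p (m - c + c)) = j
    rw [if_neg (by omega)]
    have : m - c + c = m := by omega
    rw [this, hpm]
  have hfin : tpow A (m - c) i j ≤ tstar A i j := IH (m - c) (by omega) i j
  calc tpow A m i j ≤ ∏ t ∈ Finset.range m, f t := hle
    _ ≤ ∏ t ∈ Finset.range (m - c), A (p' t) (p' (t + 1)) := hsplit
    _ ≤ tpow A (m - c) (p' 0) (p' (m - c)) := path_le_tpow A (m - c) p'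
    _ = tpow A (m - c) i j := by rw [hp'0, hp'm]
    _ ≤ tstar A i j := hfin

lemma tmulVec_tId {n : ℕ} (x : Fin n → ℝ≥0) : tmulVec (tId n) x = x := by
  funext i
  apply le_antisymm
  · apply Finset.sup_le
    intro j _
    by_cases h : i = j
    · subst h; simp [tId]
    · simp [tId, h]
  · refine le_trans ?_ (Finset.le_sup (f := fun j => tId n i j * x j) (Finset.mem_univ i))
    simp [tId]

lemma tmulVec_tmul {n : ℕ} (A B : TMat n) (x : Fin n → ℝ≥0) :
    tmulVec (tmul A B) x = tmulVec A (tmulVec B x) := by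
  funext i
  show Finset.univ.sup (fun j => tmul A B i j * x j)
      = Finset.univ.sup (fun k => A i k * tmulVec B x k)
  calc Finset.univ.sup (fun j => tmul A B i j * x j)
      = Finset.univ.sup (fun j => Finset.univ.sup fun k => A i k * B k j * x j) := by
        refine Finset.sup_congr rfl fun j _ => ?_
        exact sup_mulNN (x j) Finset.univ (fun k => A i k * B k j)
    _ = Finset.univ.sup (fun k => Finset.univ.sup fun j => A i k * B k j * x j) :=
        Finset.sup_comm _ _ _
    _ = Finset.univ.sup (fun k => A i k * tmulVec B x k) := by
        refine Finset.sup_congr rfl fun k _ => ?_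
        rw [show (tmulVec B x k) = Finset.univ.sup fun j => B k j * x j from rfl,
          mul_supNN]
        exact Finset.sup_congr rfl fun j _ => by rw [mul_assoc]

lemma tmulVec_mono {n : ℕ} (A : TMat n) {x y : Fin n → ℝ≥0} (h : x ≤ y) :
    tmulVec A x ≤ tmulVec A y := by
  intro i
  apply Finset.sup_le
  intro j _
  exact le_trans (mul_le_mul_right (h j) _)
    (Finset.le_sup (f := fun j => A i j * y j) (Finset.mem_univ j))

lemma tpow_vec_le {n : ℕ} (A : TMat n) (x : Fin n → ℝ≥0)
    (hx : tmulVec A x ≤ x) (k : ℕ) : tmulVec (tpow A k) x ≤ x := by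
  induction k with
  | zero => rw [show tpow A 0 = tId n from rfl, tmulVec_tId]
  | succ k IH =>
    rw [show tpow A (k + 1) = tmul A (tpow A k) from rfl, tmulVec_tmul]
    exact le_trans (tmulVec_mono A IH) hx

end AuxTrop

/-- If Tr(A) ≤ 1, a positive vector x solves the tropical inequality A ⊗ x ≤ x
iff x = A* ⊗ u for some positive vector u. -/
theorem stmt1 {n : ℕ} (A : TMat n) (hA : tTr A ≤ 1)
    (x : Fin n → ℝ≥0) (hx : ∀ i, 0 < x i) :
    tmulVec A x ≤ x ↔
      ∃ u : Fin n → ℝ≥0, (∀ i, 0 < u i) ∧ x = tmulVec (tstar A) u := by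
  constructor
  · intro h
    refine ⟨x, hx, ?_⟩
    funext i
    apply le_antisymm
    · have h1 : tstar A i i * x i ≥ x i := by
        have h2 : (1 : ℝ≥0) ≤ tstar A i i := by
          calc (1 : ℝ≥0) = tpow A 0 i i := by simp [tpow, tId]
            _ ≤ tstar A i i := Finset.le_sup (f := fun k => tpow A k i i)
                (Finset.mem_range.2 i.pos)
        calc x i = 1 * x i := (one_mul _).symm
          _ ≤ tstar A i i * x i := mul_le_mul_left h2 _
      exact le_trans h1 (Finset.le_sup (f := fun j => tstar A i j * x j)
        (Finset.mem_univ i))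
    · apply Finset.sup_le
      intro j _
      rw [show tstar A i j = (Finset.range n).sup fun k => tpow A k i j from rfl,
        sup_mulNN]
      apply Finset.sup_le
      intro k _
      exact le_trans (Finset.le_sup (f := fun j' => tpow A k i j' * x j')
        (Finset.mem_univ j)) (tpow_vec_le A x h k i)
  · rintro ⟨u, hu, rfl⟩
    intro i
    apply Finset.sup_le
    intro j _
    have hxj : tmulVec (tstar A) u j = Finset.univ.sup fun l => tstar A j l * u l := rfl
    rw [hxj, mul_supNN]
    apply Finset.sup_le
    intro l _
    have key : A i j * tstar A j l ≤ tstar A i l := by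
      rw [show tstar A j l = (Finset.range n).sup fun k => tpow A k j l from rfl,
        mul_supNN]
      apply Finset.sup_le
      intro k _
      have h1 : A i j * tpow A k j l ≤ tpow A (k + 1) i l :=
        Finset.le_sup (f := fun j' => A i j' * tpow A k j' l) (Finset.mem_univ j)
      exact le_trans h1 (tpow_le_tstar A hA (k + 1) i l)
    calc A i j * (tstar A j l * u l) = A i j * tstar A j l * u l := by ring
      _ ≤ tstar A i l * u l := mul_le_mul_left key _
      _ ≤ Finset.univ.sup fun l => tstar A i l * u l :=
          Finset.le_sup (f := fun l => tstar A i l * u l) (Finset.mem_univ l)
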